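/- For any signed permutation π ∈ B_n, the generating function for the type B enriched order polynomial satisfies Σ_{k ≥ 0} Ω'_B(π; k) t^k = ((1+t)^n/(1-t)^{n+1})·(2t/(1+t))^{ς(π)}·(4t/(1+t)^2)^{pe_B(π)}, where ς(π) = 0 if π(1) > 0 and ς(π) = 1 if π(1) < 0. In particular Ω'_B(π; k) depends only on the number of type B peaks and the sign of π(1). -/

import Mathlib

open scoped Classical

noncomputable section

/-- A signed permutation of `{±1, …, ±n}`: a bijection `π : ℤ → ℤ` with
`π(-i) = -π(i)` that fixes every integer of absolute value greater than `n`. -/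
def IsSignedPerm (n : ℕ) (π : Equiv.Perm ℤ) : Prop :=
  (∀ i : ℤ, π (-i) = -π i) ∧ ∀ i : ℤ, (n : ℤ) < |i| → π i = i

/-- The hyperoctahedral group `B_n`, realized as a subgroup of `Equiv.Perm ℤ`. -/
def Bgroup (n : ℕ) : Subgroup (Equiv.Perm ℤ) where
  carrier := {π | IsSignedPerm n π}
  one_mem' := ⟨fun i => by simp, fun i _ => rfl⟩
  mul_mem' := fun {a b} ha hb =>
    ⟨fun i => by simp only [Equiv.Perm.mul_apply, hb.1 i, ha.1 (b i)],
     fun i hi => by simp only [Equiv.Perm.mul_apply, hb.2 i hi, ha.2 i hi]⟩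
  inv_mem' := fun {a} ha =>
    ⟨fun i => by rw [Equiv.Perm.inv_eq_iff_eq, ha.1]; simp,
     fun i hi => by rw [Equiv.Perm.inv_eq_iff_eq]; exact (ha.2 i hi).symm⟩

/-- The type B descent set of `π`: positions `0 ≤ s ≤ n-1` with `π(s) > π(s+1)`. -/
def desSetB (n : ℕ) (π : Equiv.Perm ℤ) : Finset ℕ :=
  (Finset.range n).filter fun s => π ((s : ℤ) + 1) < π (s : ℤ)

/-- The type B descent number. -/
def desB (n : ℕ) (π : Equiv.Perm ℤ) : ℕ := (desSetB n π).card

/-- Type B peak set: positions `1 ≤ i ≤ n-1` with `π(i-1) < π(i) > π(i+1)`. -/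
def peakSetB (n : ℕ) (π : Equiv.Perm ℤ) : Finset ℕ :=
  (Finset.Ico 1 n).filter fun i =>
    π ((i : ℤ) - 1) < π (i : ℤ) ∧ π ((i : ℤ) + 1) < π (i : ℤ)

/-- `ς(π)`: `0` if `π(1) > 0` and `1` if `π(1) < 0`. -/
def sgnB (π : Equiv.Perm ℤ) : ℕ := if π 1 < 0 then 1 else 0

/-- `Ω'_B(π; k)`: the number of type B enriched `π`-partitions with parts in the
chain `0 < 1⁻¹ < 1 < 2⁻¹ < 2 < ⋯ < k⁻¹ < k`, encoded as `0, 1, 2, …, 2k` (the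
code `2m-1` stands for `m⁻¹`, with exponent `-1`; even codes have exponent `+1`).
The value at position `0` is `0`. -/
def enrichedCountB (n k : ℕ) (π : Equiv.Perm ℤ) : ℕ :=
  Nat.card {a : Fin (n + 1) → ℕ //
    a 0 = 0 ∧ (∀ s, a s ≤ 2 * k) ∧
    ∀ (s : ℕ) (hs : s < n),
      if π ((s : ℤ) + 1) < π (s : ℤ) then
        a ⟨s, by omega⟩ < a ⟨s + 1, by omega⟩ ∨
          (a ⟨s, by omega⟩ = a ⟨s + 1, by omega⟩ ∧ a ⟨s + 1, by omega⟩ % 2 = 1)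
      else
        a ⟨s, by omega⟩ < a ⟨s + 1, by omega⟩ ∨
          (a ⟨s, by omega⟩ = a ⟨s + 1, by omega⟩ ∧ a ⟨s + 1, by omega⟩ % 2 = 0)}

/-! ### Auxiliary development -/

/-- One step condition: strict increase, or equality with parity prescribed by `b`. -/
def stepOK (b : Bool) (x y : ℕ) : Prop :=
  x < y ∨ (x = y ∧ y % 2 = if b then 1 else 0)

lemma stepOK.le {b : Bool} {x y : ℕ} (h : stepOK b x y) : x ≤ y := by
  rcases h with h | ⟨h, -⟩ <;> omega

/-- Number of valid chains `0 = a₀, …, a_s = j` with step conditions given by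
the boolean word `w`. -/
def cnt (w : ℕ → Bool) : ℕ → ℕ → ℕ
  | 0, j => if j = 0 then 1 else 0
  | s + 1, j => ∑ x ∈ Finset.range (j + 1), if stepOK (w s) x j then cnt w s x else 0

/-- The type of valid chains of length `s+1` ending at `j`. -/
def Pre (w : ℕ → Bool) (s j : ℕ) : Type :=
  {a : Fin (s + 1) → ℕ // a 0 = 0 ∧ a (Fin.last s) = j ∧
    ∀ i : Fin s, stepOK (w i) (a i.castSucc) (a i.succ)}

lemma pre_mono {w : ℕ → Bool} {s : ℕ} (a : Fin (s + 1) → ℕ)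
    (h : ∀ i : Fin s, stepOK (w i) (a i.castSucc) (a i.succ)) (i : Fin (s + 1)) :
    a i ≤ a (Fin.last s) := by
  have key : ∀ d m, (hm : m + d = s) → a ⟨m, by omega⟩ ≤ a (Fin.last s) := by
    intro d
    induction d with
    | zero =>
      intro m hm
      have hms : m = s := by omega
      subst hms
      exact le_rfl
    | succ d ih =>
      intro m hm
      have h1 := (h ⟨m, by omega⟩).le
      exact le_trans h1 (ih (m + 1) (by omega))
  have hi := i.isLt
  have := key (s - i.val) i.val (by omega)
  simpa using this

instance (w : ℕ → Bool) (s j : ℕ) : Finite (Pre w s j) := by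
  apply Finite.of_injective
    (fun a => (fun i => (⟨a.1 i, by
      have := pre_mono a.1 a.2.2.2 i
      have h2 := a.2.2.1
      omega⟩ : Fin (j + 1)) : Fin (s + 1) → Fin (j + 1)))
  intro a b hab
  apply Subtype.ext
  funext i
  have := congrFun hab i
  exact congrArg Fin.val this

/-- Peeling off the last entry of a chain. -/
def preEquiv (w : ℕ → Bool) (s j : ℕ) :
    Pre w (s + 1) j ≃
      Σ x : ((Finset.range (j + 1)).filter fun x => stepOK (w s) x j : Finset ℕ),
        Pre w s x.1 := by
  have h0 : (0 : Fin (s + 2)) = (0 : Fin (s + 1)).castSucc := by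
    apply Fin.ext; simp
  refine ⟨fun a => ⟨⟨a.1 (Fin.last s).castSucc, ?_⟩, ⟨Fin.init a.1, ?_, rfl, ?_⟩⟩,
          fun xb => ⟨Fin.snoc xb.2.1 j, ?_, ?_, ?_⟩, ?_, ?_⟩
  · rw [Finset.mem_filter, Finset.mem_range]
    constructor
    · have := pre_mono a.1 a.2.2.2 (Fin.last s).castSucc
      have h2 := a.2.2.1
      omega
    · have h3 := a.2.2.2 (Fin.last s)
      rw [Fin.succ_last, a.2.2.1] at h3
      simpa using h3
  · show a.1 ((0 : Fin (s + 1)).castSucc) = 0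
    rw [← h0]
    exact a.2.1
  · intro i
    have h3 := a.2.2.2 i.castSucc
    show stepOK (w i) (Fin.init a.1 i.castSucc) (Fin.init a.1 i.succ)
    have e1 : Fin.init a.1 i.castSucc = a.1 i.castSucc.castSucc := rfl
    have e2 : Fin.init a.1 i.succ = a.1 i.succ.castSucc := rfl
    rw [e1, e2, ← Fin.succ_castSucc]
    simpa using h3
  · rw [h0, Fin.snoc_castSucc]
    exact xb.2.2.1
  · rw [Fin.snoc_last]
  · intro i
    induction i using Fin.lastCases with
    | last =>
      have hmem := xb.1.2
      rw [Finset.mem_filter] at hmem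
      rw [Fin.succ_last, Fin.snoc_castSucc, Fin.snoc_last, xb.2.2.2.1]
      simpa using hmem.2
    | cast i =>
      have h3 := xb.2.2.2.2 i
      rw [Fin.succ_castSucc, Fin.snoc_castSucc, Fin.snoc_castSucc]
      simpa using h3
  · intro a
    apply Subtype.ext
    show Fin.snoc (Fin.init a.1) j = a.1
    have h := Fin.snoc_init_self a.1
    rw [a.2.2.1] at h
    exact h
  · rintro ⟨⟨x, hx⟩, ⟨b, hb⟩⟩
    obtain rfl : (Fin.snoc b j : Fin (s + 2) → ℕ) (Fin.last s).castSucc = x := by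
      rw [Fin.snoc_castSucc]; exact hb.2.1
    apply Sigma.ext
    · exact Subtype.ext rfl
    · apply heq_of_eq
      apply Subtype.ext
      show Fin.init (Fin.snoc b j : Fin (s + 2) → ℕ) = b
      exact Fin.init_snoc (α := fun _ => ℕ) j b

lemma card_pre (w : ℕ → Bool) : ∀ s j, Nat.card (Pre w s j) = cnt w s j := by
  intro s
  induction s with
  | zero =>
    intro j
    by_cases hj : j = 0
    · subst hj
      have : Unique (Pre w 0 0) := by
        refine ⟨⟨⟨fun _ => 0, rfl, rfl, fun i => i.elim0⟩⟩, ?_⟩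
        rintro ⟨a, ha⟩
        apply Subtype.ext
        funext i
        have hi : i = 0 := by
          apply Fin.ext
          have := i.isLt
          omega
        show a i = 0
        rw [hi]
        exact ha.1
      rw [Nat.card_unique]
      simp [cnt]
    · have : IsEmpty (Pre w 0 j) := by
        constructor
        rintro ⟨a, ha⟩
        apply hj
        rw [← ha.2.1, show Fin.last 0 = 0 from rfl, ha.1]
      rw [Nat.card_of_isEmpty]
      simp [cnt, hj]
  | succ s ih =>
    intro j
    rw [Nat.card_congr (preEquiv w s j)]
    letI : ∀ x : ((Finset.range (j + 1)).filter fun x => stepOK (w s) x j : Finset ℕ),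
        Fintype (Pre w s x.1) := fun x => Fintype.ofFinite _
    rw [Nat.card_eq_fintype_card, Fintype.card_sigma]
    have : ∀ x : ((Finset.range (j + 1)).filter fun x => stepOK (w s) x j : Finset ℕ),
        Fintype.card (Pre w s x.1) = cnt w s x.1 := by
      intro x
      rw [← Nat.card_eq_fintype_card, ih]
    rw [Finset.sum_congr rfl (fun x _ => this x)]
    rw [Finset.sum_coe_sort
      ((Finset.range (j + 1)).filter fun x => stepOK (w s) x j) (cnt w s)]
    rw [Finset.sum_filter]
    rfl

/-- The descent word of a signed permutation. -/
def wB (π : Equiv.Perm ℤ) (s : ℕ) : Bool := decide (π ((s : ℤ) + 1) < π (s : ℤ))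

lemma cond_iff (π : Equiv.Perm ℤ) (s x y : ℕ) :
    (if π ((s : ℤ) + 1) < π (s : ℤ) then
        x < y ∨ (x = y ∧ y % 2 = 1)
      else
        x < y ∨ (x = y ∧ y % 2 = 0)) ↔ stepOK (wB π s) x y := by
  by_cases h : π ((s : ℤ) + 1) < π (s : ℤ) <;> simp [stepOK, wB, h]

/-- Splitting enriched partitions by their final value. -/
def eA (n k : ℕ) (π : Equiv.Perm ℤ) :
    {a : Fin (n + 1) → ℕ //
      a 0 = 0 ∧ (∀ s, a s ≤ 2 * k) ∧
      ∀ (s : ℕ) (hs : s < n),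
        if π ((s : ℤ) + 1) < π (s : ℤ) then
          a ⟨s, by omega⟩ < a ⟨s + 1, by omega⟩ ∨
            (a ⟨s, by omega⟩ = a ⟨s + 1, by omega⟩ ∧ a ⟨s + 1, by omega⟩ % 2 = 1)
        else
          a ⟨s, by omega⟩ < a ⟨s + 1, by omega⟩ ∨
            (a ⟨s, by omega⟩ = a ⟨s + 1, by omega⟩ ∧ a ⟨s + 1, by omega⟩ % 2 = 0)} ≃
    Σ j : (Finset.range (2 * k + 1) : Finset ℕ), Pre (wB π) n j.1 := by
  refine ⟨fun a => ⟨⟨a.1 (Fin.last n), ?_⟩, ⟨a.1, a.2.1, rfl, ?_⟩⟩,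
          fun xb => ⟨xb.2.1, xb.2.2.1, ?_, ?_⟩, ?_, ?_⟩
  · rw [Finset.mem_range]
    have := a.2.2.1 (Fin.last n)
    omega
  · intro i
    have h := a.2.2.2 i.val i.isLt
    exact (cond_iff π i.val _ _).mp h
  · intro s
    have h1 := pre_mono xb.2.1 xb.2.2.2.2 s
    have h2 := xb.2.2.2.1
    have h3 := xb.1.2
    rw [Finset.mem_range] at h3
    omega
  · intro s hs
    apply (cond_iff π s _ _).mpr
    exact xb.2.2.2.2 ⟨s, hs⟩
  · intro a
    exact Subtype.ext rfl
  · rintro ⟨⟨j, hj⟩, ⟨b, hb⟩⟩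
    obtain rfl : b (Fin.last n) = j := hb.2.1
    apply Sigma.ext
    · exact Subtype.ext rfl
    · exact heq_of_eq (Subtype.ext rfl)

lemma enriched_eq_sum (n k : ℕ) (π : Equiv.Perm ℤ) :
    enrichedCountB n k π = ∑ j ∈ Finset.range (2 * k + 1), cnt (wB π) n j := by
  rw [enrichedCountB, Nat.card_congr (eA n k π)]
  letI : ∀ j : (Finset.range (2 * k + 1) : Finset ℕ), Fintype (Pre (wB π) n j.1) :=
    fun _ => Fintype.ofFinite _
  rw [Nat.card_eq_fintype_card, Fintype.card_sigma]
  have h : ∀ j : (Finset.range (2 * k + 1) : Finset ℕ),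
      Fintype.card (Pre (wB π) n j.1) = cnt (wB π) n j.1 := fun j => by
    rw [← Nat.card_eq_fintype_card, card_pre]
  rw [Finset.sum_congr rfl (fun j _ => h j)]
  exact Finset.sum_coe_sort (Finset.range (2 * k + 1)) (cnt (wB π) n)

end

noncomputable section

open PowerSeries

/-- Generating function for chains ending at an even value `2k`. -/
def Pser (w : ℕ → Bool) (s : ℕ) : ℚ⟦X⟧ := PowerSeries.mk fun k => (cnt w s (2 * k) : ℚ)

/-- Generating function for chains ending at an odd value `2k-1`. -/
def Qser (w : ℕ → Bool) (s : ℕ) : ℚ⟦X⟧ :=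
  PowerSeries.mk fun k => match k with
    | 0 => (0 : ℚ)
    | k + 1 => (cnt w s (2 * k + 1) : ℚ)

def sigw (w : ℕ → Bool) : ℕ := if w 0 then 1 else 0

def pkc (w : ℕ → Bool) (s : ℕ) : ℕ :=
  ((Finset.Ico 1 s).filter fun i => w (i - 1) = false ∧ w i = true).card

def trc (w : ℕ → Bool) (s : ℕ) : ℕ :=
  ((Finset.Ico 1 s).filter fun i => w (i - 1) = true ∧ w i = false).card

lemma cnt_succ (w : ℕ → Bool) (s j : ℕ) :
    cnt w (s + 1) j = (∑ x ∈ Finset.range j, cnt w s x) +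
      if j % 2 = (if w s then 1 else 0) then cnt w s j else 0 := by
  show (∑ x ∈ Finset.range (j + 1), if stepOK (w s) x j then cnt w s x else 0) = _
  rw [Finset.sum_range_succ]
  congr 1
  · apply Finset.sum_congr rfl
    intro x hx
    exact if_pos (show stepOK (w s) x j from Or.inl (Finset.mem_range.mp hx))
  · by_cases hp : j % 2 = (if w s then 1 else 0)
    · rw [if_pos hp, if_pos (show stepOK (w s) j j from Or.inr ⟨rfl, hp⟩)]
    · rw [if_neg hp, if_neg]
      intro hstep
      rcases (show j < j ∨ (j = j ∧ j % 2 = if w s then 1 else 0) from hstep) with h | ⟨-, h⟩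
      · omega
      · exact hp h

lemma cnt_even_f (w : ℕ → Bool) (s k : ℕ) (hw : w s = false) :
    cnt w (s + 1) (2 * k) = (∑ x ∈ Finset.range (2 * k), cnt w s x) + cnt w s (2 * k) := by
  rw [cnt_succ, hw, show (if (false : Bool) then 1 else 0) = 0 from rfl, if_pos (by omega)]

lemma cnt_even_t (w : ℕ → Bool) (s k : ℕ) (hw : w s = true) :
    cnt w (s + 1) (2 * k) = ∑ x ∈ Finset.range (2 * k), cnt w s x := by
  rw [cnt_succ, hw, show (if (true : Bool) then 1 else 0) = 1 from rfl, if_neg (by omega),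
    Nat.add_zero]

lemma cnt_odd_t (w : ℕ → Bool) (s k : ℕ) (hw : w s = true) :
    cnt w (s + 1) (2 * k + 1) =
      (∑ x ∈ Finset.range (2 * k + 1), cnt w s x) + cnt w s (2 * k + 1) := by
  rw [cnt_succ, hw, show (if (true : Bool) then 1 else 0) = 1 from rfl, if_pos (by omega)]

lemma cnt_odd_f (w : ℕ → Bool) (s k : ℕ) (hw : w s = false) :
    cnt w (s + 1) (2 * k + 1) = ∑ x ∈ Finset.range (2 * k + 1), cnt w s x := by
  rw [cnt_succ, hw, show (if (false : Bool) then 1 else 0) = 0 from rfl, if_neg (by omega),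
    Nat.add_zero]

lemma coeff_osm (f : ℚ⟦X⟧) (k : ℕ) :
    (PowerSeries.coeff k) ((1 - X) * f) =
      PowerSeries.coeff k f - if k = 0 then 0 else PowerSeries.coeff (k - 1) f := by
  rw [sub_mul, one_mul, map_sub]
  cases k with
  | zero => rw [PowerSeries.coeff_zero_X_mul, if_pos rfl]
  | succ k => rw [PowerSeries.coeff_succ_X_mul, if_neg (Nat.succ_ne_zero k), Nat.add_sub_cancel]

lemma coeff_X_mul' (f : ℚ⟦X⟧) (k : ℕ) :
    (PowerSeries.coeff k) (X * f) =
      if k = 0 then 0 else PowerSeries.coeff (k - 1) f := by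
  cases k with
  | zero => rw [PowerSeries.coeff_zero_X_mul, if_pos rfl]
  | succ k => rw [PowerSeries.coeff_succ_X_mul, if_neg (Nat.succ_ne_zero k), Nat.add_sub_cancel]

lemma coeff_Pser (w : ℕ → Bool) (s k : ℕ) :
    PowerSeries.coeff k (Pser w s) = (cnt w s (2 * k) : ℚ) := by
  rw [Pser, PowerSeries.coeff_mk]

lemma coeff_Qser_zero (w : ℕ → Bool) (s : ℕ) :
    PowerSeries.coeff 0 (Qser w s) = 0 := by
  rw [Qser, PowerSeries.coeff_mk]

lemma coeff_Qser_succ (w : ℕ → Bool) (s k : ℕ) :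
    PowerSeries.coeff (k + 1) (Qser w s) = (cnt w s (2 * k + 1) : ℚ) := by
  rw [Qser, PowerSeries.coeff_mk]

lemma sum_cast_split (w : ℕ → Bool) (s k : ℕ) :
    (∑ x ∈ Finset.range (2 * (k + 1)), (cnt w s x : ℚ)) =
      (∑ x ∈ Finset.range (2 * k), (cnt w s x : ℚ)) +
        (cnt w s (2 * k) : ℚ) + (cnt w s (2 * k + 1) : ℚ) := by
  rw [show 2 * (k + 1) = (2 * k + 1) + 1 by ring, Finset.sum_range_succ, Finset.sum_range_succ]

lemma sum_cast_split' (w : ℕ → Bool) (s k : ℕ) :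
    (∑ x ∈ Finset.range (2 * (k + 1) + 1), (cnt w s x : ℚ)) =
      (∑ x ∈ Finset.range (2 * k + 1), (cnt w s x : ℚ)) +
        (cnt w s (2 * k + 1) : ℚ) + (cnt w s (2 * k + 2) : ℚ) := by
  rw [show 2 * (k + 1) + 1 = (2 * k + 2) + 1 by ring, Finset.sum_range_succ,
    show (2 * k + 2) = (2 * k + 1) + 1 by ring, Finset.sum_range_succ]

lemma cast_cnt_even_f (w : ℕ → Bool) (s : ℕ) (hw : w s = false) (k : ℕ) :
    (cnt w (s + 1) (2 * k) : ℚ) =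
      (∑ x ∈ Finset.range (2 * k), (cnt w s x : ℚ)) + (cnt w s (2 * k) : ℚ) := by
  have := congrArg (Nat.cast : ℕ → ℚ) (cnt_even_f w s k hw)
  push_cast at this
  exact this

lemma cast_cnt_even_t (w : ℕ → Bool) (s : ℕ) (hw : w s = true) (k : ℕ) :
    (cnt w (s + 1) (2 * k) : ℚ) = ∑ x ∈ Finset.range (2 * k), (cnt w s x : ℚ) := by
  have := congrArg (Nat.cast : ℕ → ℚ) (cnt_even_t w s k hw)
  push_cast at this
  exact this

lemma cast_cnt_odd_t (w : ℕ → Bool) (s : ℕ) (hw : w s = true) (k : ℕ) :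
    (cnt w (s + 1) (2 * k + 1) : ℚ) =
      (∑ x ∈ Finset.range (2 * k + 1), (cnt w s x : ℚ)) + (cnt w s (2 * k + 1) : ℚ) := by
  have := congrArg (Nat.cast : ℕ → ℚ) (cnt_odd_t w s k hw)
  push_cast at this
  exact this

lemma cast_cnt_odd_f (w : ℕ → Bool) (s : ℕ) (hw : w s = false) (k : ℕ) :
    (cnt w (s + 1) (2 * k + 1) : ℚ) =
      ∑ x ∈ Finset.range (2 * k + 1), (cnt w s x : ℚ) := by
  have := congrArg (Nat.cast : ℕ → ℚ) (cnt_odd_f w s k hw)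
  push_cast at this
  exact this

lemma R1 (w : ℕ → Bool) (s : ℕ) :
    (1 - X) * Pser w (s + 1) =
      X * Pser w s + (if w s then 0 else (1 - X) * Pser w s) + Qser w s := by
  cases hw : w s with
  | false =>
    rw [if_neg (by simp [hw])]
    ext k
    cases k with
    | zero =>
      simp only [map_add, coeff_osm, coeff_X_mul', if_pos rfl, if_true, coeff_Pser, coeff_Qser_zero]
      have h1 := cast_cnt_even_f w s hw 0
      simp only [Nat.mul_zero, Finset.range_zero, Finset.sum_empty] at h1
      rw [show (2 : ℕ) * 0 = 0 by ring] at *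
      linarith
    | succ k =>
      simp only [map_add, coeff_osm, coeff_X_mul', if_neg (Nat.succ_ne_zero k),
        Nat.add_sub_cancel, coeff_Pser, coeff_Qser_succ]
      have h1 := cast_cnt_even_f w s hw (k + 1)
      have h2 := cast_cnt_even_f w s hw k
      have h3 := sum_cast_split w s k
      linarith
  | true =>
    rw [if_pos (by simp [hw])]
    ext k
    cases k with
    | zero =>
      simp only [map_add, map_zero, add_zero, coeff_osm, coeff_X_mul', if_pos rfl, if_true, coeff_Pser,
        coeff_Qser_zero]
      have h1 := cast_cnt_even_t w s hw 0
      simp only [Nat.mul_zero, Finset.range_zero, Finset.sum_empty] at h1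
      rw [show (2 : ℕ) * 0 = 0 by ring] at *
      linarith
    | succ k =>
      simp only [map_add, map_zero, add_zero, coeff_osm, coeff_X_mul',
        if_neg (Nat.succ_ne_zero k), Nat.add_sub_cancel, coeff_Pser, coeff_Qser_succ]
      have h1 := cast_cnt_even_t w s hw (k + 1)
      have h2 := cast_cnt_even_t w s hw k
      have h3 := sum_cast_split w s k
      linarith

lemma R2 (w : ℕ → Bool) (s : ℕ) :
    (1 - X) * Qser w (s + 1) =
      X * Pser w s + X * Qser w s + (if w s then (1 - X) * Qser w s else 0) := by
  cases hw : w s with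
  | false =>
    rw [if_neg (by simp [hw])]
    ext k
    cases k with
    | zero =>
      simp only [map_add, map_zero, add_zero, coeff_osm, coeff_X_mul', if_pos rfl, if_true,
        coeff_Qser_zero]
      linarith
    | succ k =>
      simp only [map_add, map_zero, add_zero, coeff_osm, coeff_X_mul',
        if_neg (Nat.succ_ne_zero k), Nat.add_sub_cancel, coeff_Pser, coeff_Qser_succ]
      cases k with
      | zero =>
        simp only [if_pos rfl, if_true, coeff_Qser_zero, coeff_Qser_succ, coeff_Pser]
        have h1 := cast_cnt_odd_f w s hw 0
        simp only [Nat.mul_zero, Nat.zero_add, Finset.sum_range_one] at h1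
        rw [show (2 : ℕ) * 0 + 1 = 1 by ring, show (2 : ℕ) * 0 = 0 by ring] at *
        linarith
      | succ k =>
        simp only [if_neg (Nat.succ_ne_zero k), Nat.add_sub_cancel, coeff_Qser_succ, coeff_Pser]
        have h1 := cast_cnt_odd_f w s hw (k + 1)
        have h2 := cast_cnt_odd_f w s hw k
        have h3 := sum_cast_split' w s k
        have h4 : (cnt w s (2 * (k + 1)) : ℚ) = (cnt w s (2 * k + 2) : ℚ) := by norm_num; ring_nf
        linarith
  | true =>
    rw [if_pos (by simp [hw])]
    ext k
    cases k with
    | zero =>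
      simp only [map_add, coeff_osm, coeff_X_mul', if_pos rfl, if_true, coeff_Qser_zero]
      linarith
    | succ k =>
      simp only [map_add, coeff_osm, coeff_X_mul', if_neg (Nat.succ_ne_zero k),
        Nat.add_sub_cancel, coeff_Pser, coeff_Qser_succ]
      cases k with
      | zero =>
        simp only [if_pos rfl, if_true, coeff_Qser_zero, coeff_Qser_succ, coeff_Pser]
        have h1 := cast_cnt_odd_t w s hw 0
        simp only [Nat.mul_zero, Nat.zero_add, Finset.sum_range_one] at h1
        rw [show (2 : ℕ) * 0 + 1 = 1 by ring, show (2 : ℕ) * 0 = 0 by ring] at *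
        linarith
      | succ k =>
        simp only [if_neg (Nat.succ_ne_zero k), Nat.add_sub_cancel, coeff_Qser_succ, coeff_Pser]
        have h1 := cast_cnt_odd_t w s hw (k + 1)
        have h2 := cast_cnt_odd_t w s hw k
        have h3 := sum_cast_split' w s k
        have h4 : (cnt w s (2 * (k + 1)) : ℚ) = (cnt w s (2 * k + 2) : ℚ) := by norm_num; ring_nf
        linarith

/-! ### Bookkeeping on peak and transition counts -/

lemma Ico_succ_insert (s : ℕ) (hs : 1 ≤ s) :
    Finset.Ico 1 (s + 1) = insert s (Finset.Ico 1 s) := by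
  ext i
  simp only [Finset.mem_Ico, Finset.mem_insert]
  omega

lemma pkc_succ (w : ℕ → Bool) (s : ℕ) (hs : 1 ≤ s) :
    pkc w (s + 1) = pkc w s + (if w (s - 1) = false ∧ w s = true then 1 else 0) := by
  rw [pkc, pkc, Ico_succ_insert s hs, Finset.filter_insert]
  by_cases h : w (s - 1) = false ∧ w s = true
  · rw [if_pos h, Finset.card_insert_of_notMem (by simp), if_pos h]
  · rw [if_neg h, if_neg h, Nat.add_zero]

lemma trc_succ (w : ℕ → Bool) (s : ℕ) (hs : 1 ≤ s) :
    trc w (s + 1) = trc w s + (if w (s - 1) = true ∧ w s = false then 1 else 0) := by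
  rw [trc, trc, Ico_succ_insert s hs, Finset.filter_insert]
  by_cases h : w (s - 1) = true ∧ w s = false
  · rw [if_pos h, Finset.card_insert_of_notMem (by simp), if_pos h]
  · rw [if_neg h, if_neg h, Nat.add_zero]

lemma pkc_one (w : ℕ → Bool) : pkc w 1 = 0 := by simp [pkc]

lemma trc_one (w : ℕ → Bool) : trc w 1 = 0 := by simp [trc]

lemma pkc_trc_le (w : ℕ → Bool) (s : ℕ) : pkc w s + trc w s ≤ s - 1 := by
  rw [pkc, trc, ← Finset.card_union_of_disjoint]
  · calc _ ≤ (Finset.Ico 1 s).card :=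
        Finset.card_le_card (Finset.union_subset (Finset.filter_subset _ _)
          (Finset.filter_subset _ _))
      _ = s - 1 := Nat.card_Ico 1 s
  · rw [Finset.disjoint_left]
    intro i hi hi'
    rw [Finset.mem_filter] at hi hi'
    rcases hi.2 with ⟨h1, -⟩
    rcases hi'.2 with ⟨h2, -⟩
    rw [h1] at h2
    exact Bool.false_ne_true h2

lemma trans_eq (w : ℕ → Bool) : ∀ n, 1 ≤ n →
    pkc w n + sigw w = trc w n + (if w (n - 1) = true then 1 else 0) := by
  intro n
  induction n with
  | zero => omega
  | succ n ih =>
    intro _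
    by_cases hn : 1 ≤ n
    · have hih := ih hn
      rw [pkc_succ w n hn, trc_succ w n hn, Nat.add_sub_cancel]
      cases h1 : w (n - 1) <;> cases h2 : w n <;> rw [h1] at hih <;>
        simp at hih ⊢ <;> omega
    · have hn0 : n = 0 := by omega
      subst hn0
      rw [pkc_one, trc_one, Nat.add_sub_cancel]
      simp [sigw]

/-! ### Base case of the closed form -/

lemma stepOK_false_zero (j : ℕ) : stepOK false 0 j := by
  rcases Nat.eq_zero_or_pos j with h | h
  · subst h
    exact Or.inr ⟨rfl, by decide⟩
  · exact Or.inl h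

lemma stepOK_true_zero (j : ℕ) : stepOK true 0 j ↔ 0 < j := by
  constructor
  · rintro (h | ⟨h, hp⟩)
    · exact h
    · simp at hp; omega
  · exact fun h => Or.inl h

lemma cnt_one_eq (w : ℕ → Bool) (j : ℕ) :
    cnt w 1 j = if stepOK (w 0) 0 j then 1 else 0 := by
  show (∑ x ∈ Finset.range (j + 1), if stepOK (w 0) x j then cnt w 0 x else 0) = _
  rw [Finset.sum_eq_single 0]
  · rw [show cnt w 0 0 = 1 from rfl]
  · intro x hx hx0
    rw [show cnt w 0 x = if x = 0 then 1 else 0 from rfl, if_neg hx0]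
    simp
  · intro h
    exact absurd (Finset.mem_range.mpr (by omega)) h

lemma cnt_one_even_f (w : ℕ → Bool) (hw : w 0 = false) (k : ℕ) : cnt w 1 (2 * k) = 1 := by
  rw [cnt_one_eq, hw, if_pos (stepOK_false_zero _)]

lemma cnt_one_even_t (w : ℕ → Bool) (hw : w 0 = true) (k : ℕ) :
    cnt w 1 (2 * k) = if k = 0 then 0 else 1 := by
  rw [cnt_one_eq, hw]
  rcases Nat.eq_zero_or_pos k with h | h
  · subst h
    rw [if_neg, if_pos rfl]
    rw [stepOK_true_zero]
    omega
  · rw [if_pos, if_neg (by omega)]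
    rw [stepOK_true_zero]
    omega

lemma cnt_one_odd (w : ℕ → Bool) (k : ℕ) : cnt w 1 (2 * k + 1) = 1 := by
  rw [cnt_one_eq]
  cases hw : w 0
  · rw [if_pos (stepOK_false_zero _)]
  · rw [if_pos ((stepOK_true_zero _).mpr (by omega))]

lemma base_P_f (w : ℕ → Bool) (hw : w 0 = false) : (1 - X : ℚ⟦X⟧) * Pser w 1 = 1 := by
  ext k
  rw [coeff_osm, coeff_Pser, PowerSeries.coeff_one, cnt_one_even_f w hw]
  cases k with
  | zero => simp
  | succ k =>
    rw [if_neg (Nat.succ_ne_zero k), if_neg (Nat.succ_ne_zero k), Nat.add_sub_cancel,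
      coeff_Pser, cnt_one_even_f w hw]
    push_cast
    ring

lemma base_P_t (w : ℕ → Bool) (hw : w 0 = true) : (1 - X : ℚ⟦X⟧) * Pser w 1 = X := by
  ext k
  rw [coeff_osm, coeff_Pser, PowerSeries.coeff_X, cnt_one_even_t w hw]
  match k with
  | 0 => simp
  | 1 =>
    rw [if_neg one_ne_zero, show (1 : ℕ) - 1 = 0 from rfl, coeff_Pser, cnt_one_even_t w hw,
      if_pos rfl, if_neg one_ne_zero, if_pos rfl]
    push_cast
    ring
  | (k + 2) =>
    rw [if_neg (by omega : ¬(k + 2 = 0)), if_neg (by omega : ¬(k + 2 = 0)),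
      if_neg (by omega : ¬(k + 2 = 1)), show k + 2 - 1 = k + 1 by omega,
      coeff_Pser, cnt_one_even_t w hw, if_neg (by omega)]
    push_cast
    ring

lemma base_Q (w : ℕ → Bool) : (1 - X : ℚ⟦X⟧) * Qser w 1 = X := by
  ext k
  rw [coeff_osm, PowerSeries.coeff_X]
  match k with
  | 0 =>
    rw [coeff_Qser_zero, if_pos rfl, if_neg (by omega)]
    ring
  | 1 =>
    rw [coeff_Qser_succ, cnt_one_odd, if_neg one_ne_zero, show (1 : ℕ) - 1 = 0 from rfl,
      coeff_Qser_zero, if_pos rfl]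
    push_cast
    ring
  | (k + 2) =>
    rw [show ((k + 2 : ℕ)) = (k + 1) + 1 by omega, coeff_Qser_succ, cnt_one_odd,
      if_neg (by omega : ¬(k + 1 + 1 = 0)), show k + 1 + 1 - 1 = k + 1 by omega,
      coeff_Qser_succ, cnt_one_odd, if_neg (by omega : ¬(k + 1 + 1 = 1))]
    push_cast
    ring

/-! ### The closed form -/

lemma closed (w : ℕ → Bool) : ∀ s, 1 ≤ s →
    (1 - X : ℚ⟦X⟧) ^ s * Pser w s =
      2 ^ (pkc w s + trc w s) * X ^ (sigw w + pkc w s) *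
        (1 + X) ^ (s - 1 - pkc w s - trc w s) ∧
    (1 - X : ℚ⟦X⟧) ^ s * Qser w s =
      (if w (s - 1) = true then 1 else X) * ((1 - X) ^ s * Pser w s) := by
  intro s
  induction s with
  | zero => omega
  | succ s ih =>
    intro _
    by_cases hs : 1 ≤ s
    · obtain ⟨hP, hQ⟩ := ih hs
      have hrec1 : (1 - X : ℚ⟦X⟧) ^ (s + 1) * Pser w (s + 1) =
          X * ((1 - X) ^ s * Pser w s) +
            (if w s then 0 else (1 - X) * ((1 - X) ^ s * Pser w s)) +
            (1 - X) ^ s * Qser w s := by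
        calc (1 - X : ℚ⟦X⟧) ^ (s + 1) * Pser w (s + 1)
            = (1 - X) ^ s * ((1 - X) * Pser w (s + 1)) := by ring
          _ = _ := by rw [R1 w s]; cases hw : w s <;> simp [hw] <;> ring
      have hrec2 : (1 - X : ℚ⟦X⟧) ^ (s + 1) * Qser w (s + 1) =
          X * ((1 - X) ^ s * Pser w s) + X * ((1 - X) ^ s * Qser w s) +
            (if w s then (1 - X) * ((1 - X) ^ s * Qser w s) else 0) := by
        calc (1 - X : ℚ⟦X⟧) ^ (s + 1) * Qser w (s + 1)
            = (1 - X) ^ s * ((1 - X) * Qser w (s + 1)) := by ring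
          _ = _ := by rw [R2 w s]; cases hw : w s <;> simp [hw] <;> ring
      have hb : pkc w s + trc w s ≤ s - 1 := pkc_trc_le w s
      obtain ⟨g, hg⟩ : ∃ g, s - 1 - pkc w s - trc w s = g := ⟨_, rfl⟩
      have hsg : s = pkc w s + trc w s + g + 1 := by omega
      rw [hg] at hP
      cases h1 : w (s - 1) <;> cases h2 : w s <;> rw [h1] at hQ <;>
        rw [h2] at hrec1 hrec2
      -- case (false, false)
      · rw [if_neg (by simp)] at hQ
        rw [if_neg (by simp)] at hrec1
        rw [if_neg (by simp)] at hrec2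
        have hpk1 : pkc w (s + 1) = pkc w s := by
          rw [pkc_succ w s hs, if_neg (by simp [h2]), Nat.add_zero]
        have htc1 : trc w (s + 1) = trc w s := by
          rw [trc_succ w s hs, if_neg (by simp [h1]), Nat.add_zero]
        constructor
        · rw [hrec1, hQ, hP, hpk1, htc1,
            show s + 1 - 1 - pkc w s - trc w s = g + 1 by omega, pow_succ]
          ring
        · rw [hrec2, hrec1, hQ, Nat.add_sub_cancel, h2, if_neg (by simp)]
          ring
      -- case (false, true)
      · rw [if_neg (by simp)] at hQ
        rw [if_pos rfl] at hrec1
        rw [if_pos rfl] at hrec2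
        have hpk1 : pkc w (s + 1) = pkc w s + 1 := by
          rw [pkc_succ w s hs, if_pos ⟨h1, h2⟩]
        have htc1 : trc w (s + 1) = trc w s := by
          rw [trc_succ w s hs, if_neg (by simp [h1]), Nat.add_zero]
        constructor
        · rw [hrec1, hQ, hP, hpk1, htc1,
            show s + 1 - 1 - (pkc w s + 1) - trc w s = g by omega,
            show pkc w s + 1 + trc w s = (pkc w s + trc w s) + 1 by omega,
            show sigw w + (pkc w s + 1) = (sigw w + pkc w s) + 1 by omega,
            pow_succ, pow_succ]
          ring
        · rw [hrec2, hrec1, hQ, Nat.add_sub_cancel, h2, if_pos rfl]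
          ring
      -- case (true, false)
      · rw [if_pos rfl] at hQ
        rw [if_neg (by simp)] at hrec1
        rw [if_neg (by simp)] at hrec2
        have hpk1 : pkc w (s + 1) = pkc w s := by
          rw [pkc_succ w s hs, if_neg (by simp [h2]), Nat.add_zero]
        have htc1 : trc w (s + 1) = trc w s + 1 := by
          rw [trc_succ w s hs, if_pos ⟨h1, h2⟩]
        constructor
        · rw [hrec1, hQ, hP, hpk1, htc1,
            show s + 1 - 1 - pkc w s - (trc w s + 1) = g by omega,
            show pkc w s + (trc w s + 1) = (pkc w s + trc w s) + 1 by omega, pow_succ]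
          ring
        · rw [hrec2, hrec1, hQ, Nat.add_sub_cancel, h2, if_neg (by simp)]
          ring
      -- case (true, true)
      · rw [if_pos rfl] at hQ
        rw [if_pos rfl] at hrec1
        rw [if_pos rfl] at hrec2
        have hpk1 : pkc w (s + 1) = pkc w s := by
          rw [pkc_succ w s hs, if_neg (by simp [h1]), Nat.add_zero]
        have htc1 : trc w (s + 1) = trc w s := by
          rw [trc_succ w s hs, if_neg (by simp [h2]), Nat.add_zero]
        constructor
        · rw [hrec1, hQ, hP, hpk1, htc1,
            show s + 1 - 1 - pkc w s - trc w s = g + 1 by omega, pow_succ]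
          ring
        · rw [hrec2, hrec1, hQ, Nat.add_sub_cancel, h2, if_pos rfl]
          ring
    · have hs0 : s = 0 := by omega
      subst hs0
      rw [pkc_one, trc_one, Nat.add_sub_cancel]
      cases hw : w 0
      · constructor
        · rw [pow_one, base_P_f w hw]
          simp [sigw, hw]
        · rw [pow_one, base_Q w, base_P_f w hw]
          simp [hw]
      · constructor
        · rw [pow_one, base_P_t w hw]
          simp [sigw, hw]
        · rw [pow_one, base_Q w, base_P_t w hw]
          simp [hw]

/-! ### Assembly -/

lemma sum_PQ (w : ℕ → Bool) (n : ℕ) :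
    (1 - X : ℚ⟦X⟧) *
        PowerSeries.mk (fun k => ((∑ j ∈ Finset.range (2 * k + 1), cnt w n j : ℕ) : ℚ)) =
      Pser w n + Qser w n := by
  ext k
  rw [coeff_osm, map_add, PowerSeries.coeff_mk]
  cases k with
  | zero =>
    rw [if_pos rfl, coeff_Pser, coeff_Qser_zero]
    rw [show 2 * 0 + 1 = 1 by ring, Finset.sum_range_one, show 2 * 0 = 0 by ring]
    ring
  | succ k =>
    rw [if_neg (Nat.succ_ne_zero k), Nat.add_sub_cancel, PowerSeries.coeff_mk, coeff_Pser,
      coeff_Qser_succ]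
    have h1 : (∑ j ∈ Finset.range (2 * (k + 1) + 1), cnt w n j) =
        (∑ j ∈ Finset.range (2 * k + 1), cnt w n j) + cnt w n (2 * k + 1)
          + cnt w n (2 * k + 2) := by
      rw [show 2 * (k + 1) + 1 = (2 * k + 2) + 1 by ring, Finset.sum_range_succ,
        show 2 * k + 2 = (2 * k + 1) + 1 by ring, Finset.sum_range_succ]
    have h2 := congrArg (Nat.cast : ℕ → ℚ) h1
    push_cast at h2
    have h3 : (cnt w n (2 * (k + 1)) : ℚ) = (cnt w n (2 * k + 2) : ℚ) := by
      rw [show 2 * (k + 1) = 2 * k + 2 by ring]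
    push_cast
    linarith [h2, h3]

lemma one_sub_X_ne : (1 - X : ℚ⟦X⟧) ≠ 0 := by
  intro h
  have := congrArg (PowerSeries.constantCoeff) h
  simp at this

lemma key (w : ℕ → Bool) (n : ℕ) (hn : 1 ≤ n) :
    PowerSeries.mk (fun k => ((∑ j ∈ Finset.range (2 * k + 1), cnt w n j : ℕ) : ℚ)) =
      (1 + X) ^ n * ((1 - X) ^ (n + 1))⁻¹ *
        (2 * X * ((1 + X)⁻¹)) ^ sigw w *
        (4 * X * (((1 + X) ^ 2)⁻¹)) ^ pkc w n := by
  obtain ⟨hP, hQ⟩ := closed w n hn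
  have hb : pkc w n + trc w n ≤ n - 1 := pkc_trc_le w n
  have htr := trans_eq w n hn
  set P := pkc w n with hPdef
  set T := trc w n with hTdef
  set σ := sigw w with hσdef
  have h2 : (1 - X : ℚ⟦X⟧) ^ (n + 1) *
      PowerSeries.mk (fun k => ((∑ j ∈ Finset.range (2 * k + 1), cnt w n j : ℕ) : ℚ)) =
      2 ^ (σ + 2 * P) * X ^ (σ + P) * (1 + X) ^ (n - σ - 2 * P) := by
    calc (1 - X : ℚ⟦X⟧) ^ (n + 1) * _
        = (1 - X) ^ n * ((1 - X) *
            PowerSeries.mk (fun k => ((∑ j ∈ Finset.range (2 * k + 1), cnt w n j : ℕ) : ℚ))) := by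
          ring
      _ = (1 - X) ^ n * Pser w n + (1 - X) ^ n * Qser w n := by rw [sum_PQ]; ring
      _ = _ := by
          rw [hQ, hP]
          cases hwl : w (n - 1)
          · rw [hwl] at htr
            rw [if_neg (by simp)] at htr
            rw [if_neg (by simp), show σ + 2 * P = P + T by omega,
              show n - σ - 2 * P = (n - 1 - P - T) + 1 by omega, pow_succ]
            ring
          · rw [hwl] at htr
            rw [if_pos rfl] at htr
            rw [if_pos rfl, show σ + 2 * P = (P + T) + 1 by omega,
              show n - σ - 2 * P = n - 1 - P - T by omega, pow_succ]
            ring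
  have hC1 : PowerSeries.constantCoeff (1 - X : ℚ⟦X⟧) = 1 := by simp
  have hC2 : PowerSeries.constantCoeff (1 + X : ℚ⟦X⟧) = 1 := by simp
  have hu1 : ((1 - X : ℚ⟦X⟧) ^ (n + 1)) * (((1 - X) ^ (n + 1))⁻¹) = 1 :=
    PowerSeries.mul_inv_cancel _ (by rw [map_pow, hC1, one_pow]; exact one_ne_zero)
  have hu2 : (1 + X : ℚ⟦X⟧) * (1 + X)⁻¹ = 1 :=
    PowerSeries.mul_inv_cancel _ (by rw [hC2]; exact one_ne_zero)
  have hu3 : ((1 + X : ℚ⟦X⟧) ^ 2) * (((1 + X) ^ 2)⁻¹) = 1 :=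
    PowerSeries.mul_inv_cancel _ (by rw [map_pow, hC2, one_pow]; exact one_ne_zero)
  have hle : σ + 2 * P ≤ n := by
    have hite : (if w (n - 1) = true then 1 else 0) ≤ 1 := by split <;> omega
    omega
  have h3 : ((1 + X : ℚ⟦X⟧) ^ n * ((1 - X) ^ (n + 1))⁻¹ * (2 * X * ((1 + X)⁻¹)) ^ σ *
      (4 * X * (((1 + X) ^ 2)⁻¹)) ^ P) * (1 - X) ^ (n + 1) =
      2 ^ (σ + 2 * P) * X ^ (σ + P) * (1 + X) ^ (n - σ - 2 * P) := by
    have e1 : (1 + X : ℚ⟦X⟧) ^ n =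
        (1 + X) ^ (n - σ - 2 * P) * ((1 + X) ^ σ * ((1 + X) ^ 2) ^ P) := by
      rw [← pow_mul, ← pow_add, ← pow_add]
      congr 1
      omega
    have e2 : (2 * X * ((1 + X : ℚ⟦X⟧)⁻¹)) ^ σ = 2 ^ σ * X ^ σ * ((1 + X)⁻¹) ^ σ := by
      rw [mul_pow, mul_pow]
    have e3 : (4 * X * (((1 + X : ℚ⟦X⟧) ^ 2)⁻¹)) ^ P =
        4 ^ P * X ^ P * (((1 + X) ^ 2)⁻¹) ^ P := by
      rw [mul_pow, mul_pow]
    have e4 : (1 + X : ℚ⟦X⟧) ^ σ * ((1 + X)⁻¹) ^ σ = 1 := by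
      rw [← mul_pow, hu2, one_pow]
    have e5 : ((1 + X : ℚ⟦X⟧) ^ 2) ^ P * (((1 + X) ^ 2)⁻¹) ^ P = 1 := by
      rw [← mul_pow, hu3, one_pow]
    have e6 : (4 : ℚ⟦X⟧) ^ P = 2 ^ (2 * P) := by
      rw [show (4 : ℚ⟦X⟧) = 2 ^ 2 by norm_num, ← pow_mul]
    calc ((1 + X : ℚ⟦X⟧) ^ n * ((1 - X) ^ (n + 1))⁻¹ * (2 * X * ((1 + X)⁻¹)) ^ σ *
          (4 * X * (((1 + X) ^ 2)⁻¹)) ^ P) * (1 - X) ^ (n + 1)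
        = ((1 - X) ^ (n + 1) * ((1 - X) ^ (n + 1))⁻¹) * ((1 + X) ^ n *
            (2 * X * ((1 + X)⁻¹)) ^ σ * (4 * X * (((1 + X) ^ 2)⁻¹)) ^ P) := by ring
      _ = (1 + X) ^ n * (2 * X * ((1 + X)⁻¹)) ^ σ * (4 * X * (((1 + X) ^ 2)⁻¹)) ^ P := by
          rw [hu1, one_mul]
      _ = ((1 + X) ^ (n - σ - 2 * P) * (2 ^ σ * X ^ σ) * (4 ^ P * X ^ P)) *
            (((1 + X) ^ σ * ((1 + X)⁻¹) ^ σ) * (((1 + X) ^ 2) ^ P * (((1 + X) ^ 2)⁻¹) ^ P)) := by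
          rw [e1, e2, e3]; ring
      _ = (1 + X) ^ (n - σ - 2 * P) * (2 ^ σ * X ^ σ) * (4 ^ P * X ^ P) := by
          rw [e4, e5]; ring
      _ = 2 ^ (σ + 2 * P) * X ^ (σ + P) * (1 + X) ^ (n - σ - 2 * P) := by
          rw [e6]; ring
  apply mul_right_cancel₀ (pow_ne_zero (n + 1) one_sub_X_ne)
  rw [h3, ← h2]
  ring

lemma pi_zero {n : ℕ} {π : Equiv.Perm ℤ} (hπ : IsSignedPerm n π) : π 0 = 0 := by
  have := hπ.1 0
  rw [neg_zero] at this
  linarith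

lemma sgn_eq {n : ℕ} (π : Equiv.Perm ℤ) (hπ : IsSignedPerm n π) : sigw (wB π) = sgnB π := by
  rw [sigw, sgnB, wB]
  have h0 : π ((0 : ℕ) : ℤ) = 0 := by rw [Nat.cast_zero]; exact pi_zero hπ
  rw [show ((0 : ℕ) : ℤ) + 1 = 1 by norm_num, h0]
  by_cases h : π 1 < 0
  · rw [if_pos (by simpa using h), if_pos h]
  · rw [if_neg (by simpa using h), if_neg h]

lemma peak_eq (n : ℕ) (π : Equiv.Perm ℤ) : (peakSetB n π).card = pkc (wB π) n := by
  rw [peakSetB, pkc]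
  congr 1
  apply Finset.filter_congr
  intro i hi
  rw [Finset.mem_Ico] at hi
  have hc1 : ((i - 1 : ℕ) : ℤ) = (i : ℤ) - 1 := by omega
  have hc2 : ((i - 1 : ℕ) : ℤ) + 1 = (i : ℤ) := by omega
  have hne : π ((i : ℤ) - 1) ≠ π (i : ℤ) := by
    intro h
    have := π.injective h
    omega
  have hw1 : wB π (i - 1) = false ↔ π ((i : ℤ) - 1) < π (i : ℤ) := by
    rw [wB, hc2, hc1, decide_eq_false_iff_not, not_lt]
    constructor
    · intro h
      exact lt_of_le_of_ne h hne
    · exact le_of_lt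
  have hw2 : wB π i = true ↔ π ((i : ℤ) + 1) < π (i : ℤ) := by
    rw [wB, decide_eq_true_eq]
  constructor
  · rintro ⟨ha, hb⟩
    exact ⟨hw1.mpr ha, hw2.mpr hb⟩
  · rintro ⟨ha, hb⟩
    exact ⟨hw1.mp ha, hw2.mp hb⟩

lemma one_sub_X_mul_one : (1 - X : ℚ⟦X⟧) * PowerSeries.mk (fun _ => (1 : ℚ)) = 1 := by
  ext k
  rw [coeff_osm, PowerSeries.coeff_mk, PowerSeries.coeff_one]
  cases k with
  | zero => simp
  | succ k =>
    rw [if_neg (Nat.succ_ne_zero k), if_neg (Nat.succ_ne_zero k), PowerSeries.coeff_mk]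
    ring

lemma part1 (n : ℕ) (π : Equiv.Perm ℤ) (hπ : IsSignedPerm n π) :
    PowerSeries.mk (fun k => (enrichedCountB n k π : ℚ)) =
      (1 + X) ^ n * ((1 - X) ^ (n + 1))⁻¹ *
        (2 * X * ((1 + X)⁻¹)) ^ sgnB π *
        (4 * X * (((1 + X) ^ 2)⁻¹)) ^ (peakSetB n π).card := by
  by_cases hn : 1 ≤ n
  · have hfun : (fun k => (enrichedCountB n k π : ℚ)) =
        (fun k => ((∑ j ∈ Finset.range (2 * k + 1), cnt (wB π) n j : ℕ) : ℚ)) := by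
      funext k
      rw [enriched_eq_sum]
    rw [congrArg PowerSeries.mk hfun, key (wB π) n hn, sgn_eq π hπ, peak_eq n π]
  · have hn0 : n = 0 := by omega
    subst hn0
    have hsg : sgnB π = 0 := by
      have h1 : π 1 = 1 := hπ.2 1 (by norm_num)
      rw [sgnB, h1, if_neg (by norm_num)]
    have hpk : peakSetB 0 π = ∅ := by
      rw [peakSetB]
      simp
    have hcnt : ∀ k, enrichedCountB 0 k π = 1 := by
      intro k
      rw [enriched_eq_sum 0 k π]
      have : ∀ j, cnt (wB π) 0 j = if j = 0 then 1 else 0 := fun j => rfl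
      rw [Finset.sum_congr rfl fun j _ => this j, Finset.sum_ite_eq' (Finset.range (2 * k + 1)) 0
        (fun _ => 1), if_pos (Finset.mem_range.mpr (by omega))]
    have hfun : (fun k => (enrichedCountB 0 k π : ℚ)) = (fun _ => (1 : ℚ)) := by
      funext k
      rw [hcnt k, Nat.cast_one]
    rw [congrArg PowerSeries.mk hfun, hsg, hpk]
    simp only [Finset.card_empty, pow_zero, mul_one, one_mul]
    have hu1 : ((1 - X : ℚ⟦X⟧) ^ (0 + 1)) * (((1 - X) ^ (0 + 1))⁻¹) = 1 :=
      PowerSeries.mul_inv_cancel _ (by rw [map_pow]; simp)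
    apply mul_right_cancel₀ (pow_ne_zero (0 + 1) one_sub_X_ne)
    have hL : (PowerSeries.mk fun _ => (1 : ℚ)) * (1 - X) ^ (0 + 1) = 1 := by
      rw [zero_add, pow_one, mul_comm]
      exact one_sub_X_mul_one
    have hR : (((1 - X : ℚ⟦X⟧) ^ (0 + 1))⁻¹) * (1 - X) ^ (0 + 1) = 1 := by
      rw [mul_comm]
      exact hu1
    rw [hL, hR]

open PowerSeries in
theorem stmt17 (n : ℕ) (π : Equiv.Perm ℤ) (hπ : IsSignedPerm n π) :
    (PowerSeries.mk (fun k => (enrichedCountB n k π : ℚ)) =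
      (1 + X) ^ n * ((1 - X) ^ (n + 1))⁻¹ *
        (2 * X * ((1 + X)⁻¹)) ^ sgnB π *
        (4 * X * (((1 + X) ^ 2)⁻¹)) ^ (peakSetB n π).card) ∧
    ∀ π' : Equiv.Perm ℤ, IsSignedPerm n π' →
      (peakSetB n π').card = (peakSetB n π).card → sgnB π' = sgnB π →
        ∀ k, enrichedCountB n k π' = enrichedCountB n k π := by
  constructor
  · exact part1 n π hπ
  · intro π' h1 h2 h3 k
    have e2 := part1 n π' h1
    rw [h2, h3] at e2
    have e := e2.trans (part1 n π hπ).symm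
    have hc := congrArg (PowerSeries.coeff k) e
    rw [PowerSeries.coeff_mk, PowerSeries.coeff_mk] at hc
    exact_mod_cast hc

end
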